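/- Let Ψ be an infinite set, A a division ring equipped with an action of S_Ψ by ring automorphisms, and let T' ⊊ T be finite subsets of Ψ. For a finite set S, let Emb(S,Ψ) denote the set of injections S ↪ Ψ, with S_Ψ acting by postcomposition, and let A⟨Emb(S,Ψ)⟩ be the free left A-module on Emb(S,Ψ) with the action g•(a·[ι]) = (g•a)·[g∘ι]. Then there exist no nonzero S_Ψ-stable A-submodules M ⊆ A⟨Emb(T,Ψ)⟩ and M' ⊆ A⟨Emb(T',Ψ)⟩ admitting an A-linear S_Ψ-equivariant bijection M → M'. -/

import Mathlib

/-- The twisted action of a permutation `g` of `Ψ` on the free left `A`-module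
`A⟨Emb(S,Ψ)⟩` on the set of embeddings `S ↪ Ψ`: `g • (a·[ι]) = (φ g a)·[g ∘ ι]`. -/
noncomputable def embAct {Ψ A S : Type} [DivisionRing A]
    (φ : Equiv.Perm Ψ →* (A ≃+* A)) (g : Equiv.Perm Ψ)
    (x : (S ↪ Ψ) →₀ A) : (S ↪ Ψ) →₀ A :=
  Finsupp.mapDomain (fun ι : S ↪ Ψ => ι.trans g.toEmbedding)
    (x.mapRange (φ g) (map_zero _))

section Aux

variable {Ψ : Type} {ι : Type*}

/-- A product of swaps fixes every point distinct from all the swapped points. -/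
lemma listSwap_apply_of_ne [DecidableEq Ψ] (l : List ι) (a b : ι → Ψ) (q : Ψ)
    (ha : ∀ i ∈ l, q ≠ a i) (hb : ∀ i ∈ l, q ≠ b i) :
    ((l.map fun i => Equiv.swap (a i) (b i)).prod) q = q := by
  induction l with
  | nil => simp
  | cons k rest ih =>
      rw [List.map_cons, List.prod_cons, Equiv.Perm.mul_apply,
        ih (fun i hi => ha i (List.mem_cons_of_mem _ hi))
          (fun i hi => hb i (List.mem_cons_of_mem _ hi)),
        Equiv.swap_apply_of_ne_of_ne (ha k (List.mem_cons_self))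
          (hb k (List.mem_cons_self))]

/-- A product of swaps with pairwise distinct points sends `a j` to `b j`. -/
lemma listSwap_apply_mem [DecidableEq Ψ] (l : List ι) (hnd : l.Nodup) (a b : ι → Ψ)
    (hainj : ∀ i ∈ l, ∀ j ∈ l, a i = a j → i = j)
    (hbinj : ∀ i ∈ l, ∀ j ∈ l, b i = b j → i = j)
    (hab : ∀ i ∈ l, ∀ j ∈ l, a i ≠ b j)
    {j : ι} (hj : j ∈ l) :
    ((l.map fun i => Equiv.swap (a i) (b i)).prod) (a j) = b j := by
  induction l with
  | nil => cases hj
  | cons k rest ih =>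
      obtain ⟨hk, hnd'⟩ := List.nodup_cons.mp hnd
      rw [List.map_cons, List.prod_cons, Equiv.Perm.mul_apply]
      rcases List.mem_cons.mp hj with rfl | hj'
      · rw [listSwap_apply_of_ne rest a b (a j) ?_ ?_, Equiv.swap_apply_left]
        · intro i hi hcon
          have hji : j = i := hainj j (List.mem_cons_self) i
            (List.mem_cons_of_mem _ hi) hcon
          exact hk (hji ▸ hi)
        · intro i hi hcon
          exact hab j (List.mem_cons_self) i (List.mem_cons_of_mem _ hi) hcon
      · rw [ih hnd'
            (fun i hi j' hj'' => hainj i (List.mem_cons_of_mem _ hi) j'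
              (List.mem_cons_of_mem _ hj''))
            (fun i hi j' hj'' => hbinj i (List.mem_cons_of_mem _ hi) j'
              (List.mem_cons_of_mem _ hj''))
            (fun i hi j' hj'' => hab i (List.mem_cons_of_mem _ hi) j'
              (List.mem_cons_of_mem _ hj'')) hj',
          Equiv.swap_apply_of_ne_of_ne ?_ ?_]
        · exact fun hcon =>
            hab k (List.mem_cons_self) j (List.mem_cons_of_mem _ hj') hcon.symm
        · intro hcon
          have hjk : j = k := hbinj j (List.mem_cons_of_mem _ hj') k
            (List.mem_cons_self) hcon
          exact hk (hjk ▸ hj')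

lemma trans_perm_injective {S : Type} (g : Equiv.Perm Ψ) :
    Function.Injective (fun ι : S ↪ Ψ => ι.trans g.toEmbedding) := by
  intro a b h
  ext s
  have h1 : g (a s) = g (b s) := DFunLike.congr_fun h s
  exact g.injective h1

lemma embAct_apply {A S : Type} [DivisionRing A] (φ : Equiv.Perm Ψ →* (A ≃+* A))
    (g : Equiv.Perm Ψ) (x : (S ↪ Ψ) →₀ A) (ε : S ↪ Ψ) :
    embAct φ g x ε = φ g (x (ε.trans (g⁻¹ : Equiv.Perm Ψ).toEmbedding)) := by
  have h1 : (ε.trans (g⁻¹ : Equiv.Perm Ψ).toEmbedding).trans g.toEmbedding = ε := by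
    ext s; simp
  have h2 := Finsupp.mapDomain_apply (trans_perm_injective (S := S) g)
    (x.mapRange (φ g) (map_zero _)) (ε.trans (g⁻¹ : Equiv.Perm Ψ).toEmbedding)
  rw [Finsupp.mapRange_apply] at h2
  calc embAct φ g x ε
      = embAct φ g x ((ε.trans (g⁻¹ : Equiv.Perm Ψ).toEmbedding).trans g.toEmbedding) := by
        rw [h1]
    _ = φ g (x (ε.trans (g⁻¹ : Equiv.Perm Ψ).toEmbedding)) := h2

end Aux

/-- **No isomorphic nonzero stable submodules at different levels.**  `A` is a
division ring with an action `φ` of `S_Ψ` by ring automorphisms, `T' ⊊ T` are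
finite subsets of the infinite set `Ψ`, and `A⟨Emb(T,Ψ)⟩`, `A⟨Emb(T',Ψ)⟩` are
the free left `A`-modules on the sets of embeddings `T ↪ Ψ`, `T' ↪ Ψ` with the
twisted `S_Ψ`-actions.  Then there are no nonzero `S_Ψ`-stable `A`-submodules
`M ⊆ A⟨Emb(T,Ψ)⟩` and `M' ⊆ A⟨Emb(T',Ψ)⟩` admitting an `A`-linear
`S_Ψ`-equivariant bijection `M → M'`. -/
theorem no_isomorphic_stable_submodules_at_distinct_levels
    (Ψ : Type) [Infinite Ψ]
    (A : Type) [DivisionRing A]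
    (φ : Equiv.Perm Ψ →* (A ≃+* A))
    (T T' : Finset Ψ) (hTT : T' ⊂ T) :
    ¬ ∃ (M : Submodule A (({x // x ∈ T} ↪ Ψ) →₀ A))
        (M' : Submodule A (({x // x ∈ T'} ↪ Ψ) →₀ A)),
        (∀ g : Equiv.Perm Ψ, ∀ x ∈ M, embAct φ g x ∈ M) ∧
        (∀ g : Equiv.Perm Ψ, ∀ x ∈ M', embAct φ g x ∈ M') ∧
        M ≠ ⊥ ∧ M' ≠ ⊥ ∧
        ∃ e : M →ₗ[A] M', Function.Bijective e ∧
          ∀ (g : Equiv.Perm Ψ) (x y : M),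
            (y : ({x // x ∈ T} ↪ Ψ) →₀ A) = embAct φ g (x : ({x // x ∈ T} ↪ Ψ) →₀ A) →
            (e y : ({x // x ∈ T'} ↪ Ψ) →₀ A) = embAct φ g (e x : ({x // x ∈ T'} ↪ Ψ) →₀ A) := by
  classical
  rintro ⟨M, M', hMst, hM'st, hMbot, hM'bot, e, ⟨einj, _⟩, heqv⟩
  obtain ⟨x, hxM, hx0⟩ := (Submodule.ne_bot_iff M).mp hMbot
  set x' : ({y // y ∈ T'} ↪ Ψ) →₀ A := (e ⟨x, hxM⟩ : ({y // y ∈ T'} ↪ Ψ) →₀ A) with hx'def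
  set t := T.card with ht
  set t' := T'.card with ht'
  have htt' : t' < t := Finset.card_lt_card hTT
  obtain ⟨ι0, hι0⟩ := Finsupp.support_nonempty_iff.mpr hx0
  -- the finite set of points of `Ψ` touched by `x` or `x'`
  set F : Finset Ψ :=
    (x.support.biUnion fun κ => Finset.univ.image ⇑κ) ∪
    (x'.support.biUnion fun κ => Finset.univ.image ⇑κ) with hF
  have hxF : ∀ κ ∈ x.support, ∀ s, κ s ∈ F := by
    intro κ hκ s
    exact Finset.mem_union_left _ (Finset.mem_biUnion.mpr
      ⟨κ, hκ, Finset.mem_image.mpr ⟨s, Finset.mem_univ s, rfl⟩⟩)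
  have hx'F : ∀ κ ∈ x'.support, ∀ s, κ s ∈ F := by
    intro κ hκ s
    exact Finset.mem_union_right _ (Finset.mem_biUnion.mpr
      ⟨κ, hκ, Finset.mem_image.mpr ⟨s, Finset.mem_univ s, rfl⟩⟩)
  set c := F.card with hc
  set m := (c + t) ^ t' + 1 with hm
  have hm1 : 1 ≤ m := Nat.succ_le_succ (Nat.zero_le _)
  -- enumeration of T
  have hTc : Fintype.card {y // y ∈ T} = t := Fintype.card_coe T
  set eT := Fintype.equivFinOfCardEq hTc with heT
  set p : Fin t → Ψ := fun i => ι0 (eT.symm i) with hp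
  have hpinj : Function.Injective p := fun i j h => by
    simpa using eT.symm.injective (ι0.injective h)
  have hpF : ∀ i, p i ∈ F := fun i => hxF ι0 hι0 _
  -- fresh points
  have hcompl : ((↑F : Set Ψ)ᶜ).Infinite := (F.finite_toSet).infinite_compl
  haveI : Infinite (↥((↑F : Set Ψ)ᶜ)) := hcompl.to_subtype
  set u : Fin t × Fin m → Ψ := fun z =>
    ((Infinite.natEmbedding (↥((↑F : Set Ψ)ᶜ)))
      ((Fintype.equivFin (Fin t × Fin m) z : Fin _) : ℕ) : Ψ) with hu
  have huinj : Function.Injective u := by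
    intro z1 z2 h
    exact (Fintype.equivFin _).injective (Fin.val_injective
      ((Infinite.natEmbedding _).injective (Subtype.coe_injective h)))
  have huF : ∀ z, u z ∉ F := by
    intro z hz
    have h2 := ((Infinite.natEmbedding (↥((↑F : Set Ψ)ᶜ)))
      ((Fintype.equivFin (Fin t × Fin m) z : Fin _) : ℕ)).2
    exact h2 (by exact_mod_cast hz)
  have hpu : ∀ i z, p i ≠ u z := fun i z h => huF z (h ▸ hpF i)
  -- the permutations
  set g : (Fin t → Fin m) → Equiv.Perm Ψ :=
    fun v => ((List.finRange t).map fun i => Equiv.swap (p i) (u (i, v i))).prod with hg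
  have hgp : ∀ v i, g v (p i) = u (i, v i) := by
    intro v i
    exact listSwap_apply_mem (List.finRange t) (List.nodup_finRange t) p
      (fun i => u (i, v i))
      (fun a _ b _ h => hpinj h)
      (fun a _ b _ h => congrArg Prod.fst (huinj h))
      (fun a _ b _ => hpu a (b, v b)) (List.mem_finRange i)
  have hgfix : ∀ v q, q ∈ F → (∀ i, q ≠ p i) → g v q = q := by
    intro v q hqF hqp
    exact listSwap_apply_of_ne (List.finRange t) p (fun i => u (i, v i)) q
      (fun i _ => hqp i) (fun i _ h => huF (i, v i) (by have h' : q = u (i, v i) := h; rw [← h']; exact hqF))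
  -- diagonal evaluation
  have hdiag : ∀ v, embAct φ (g v) x (ι0.trans (g v).toEmbedding) = φ (g v) (x ι0) := by
    intro v
    have hκ : (ι0.trans (g v).toEmbedding).trans ((g v)⁻¹ : Equiv.Perm Ψ).toEmbedding = ι0 := by
      ext s; simp
    rw [embAct_apply, hκ]
  -- off-diagonal evaluation
  have hoff : ∀ v w, w ≠ v → embAct φ (g v) x (ι0.trans (g w).toEmbedding) = 0 := by
    intro v w hvw
    rw [embAct_apply]
    set κ : {y // y ∈ T} ↪ Ψ :=
      (ι0.trans (g w).toEmbedding).trans ((g v)⁻¹ : Equiv.Perm Ψ).toEmbedding with hκdef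
    suffices h : x κ = 0 by rw [h, map_zero]
    by_contra hκ
    have hκs : κ ∈ x.support := Finsupp.mem_support_iff.mpr hκ
    obtain ⟨i0, hi0⟩ := Function.ne_iff.mp hvw
    have hufix : g v (u (i0, w i0)) = u (i0, w i0) := by
      apply listSwap_apply_of_ne (List.finRange t) p (fun i => u (i, v i)) _
      · intro i _ h
        exact hpu i (i0, w i0) h.symm
      · intro i _ h
        have h2 : (i0, w i0) = (i, v i) := huinj h
        have h2a : i0 = i := congrArg Prod.fst h2
        subst h2a
        exact hi0 (congrArg Prod.snd h2)
    have h1 : κ (eT.symm i0) = u (i0, w i0) := by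
      show ((g v)⁻¹ : Equiv.Perm Ψ) ((g w) (ι0 (eT.symm i0))) = u (i0, w i0)
      rw [show ι0 (eT.symm i0) = p i0 from rfl, hgp w i0]
      calc ((g v)⁻¹ : Equiv.Perm Ψ) (u (i0, w i0))
          = ((g v)⁻¹ : Equiv.Perm Ψ) (g v (u (i0, w i0))) := by rw [hufix]
        _ = u (i0, w i0) := Equiv.symm_apply_apply _ _
    exact huF (i0, w i0) (h1 ▸ hxF κ hκs (eT.symm i0))
  -- independence of the translates of x
  have hind : ∀ cc : (Fin t → Fin m) → A,
      ∑ v, cc v • embAct φ (g v) x = 0 → ∀ w, cc w = 0 := by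
    intro cc hsum w
    have h0 := congrArg (fun f : ({y // y ∈ T} ↪ Ψ) →₀ A =>
      f (ι0.trans (g w).toEmbedding)) hsum
    simp only [Finset.sum_apply', Finsupp.smul_apply, smul_eq_mul,
      Finsupp.coe_zero, Pi.zero_apply] at h0
    rw [Finset.sum_eq_single w (fun b _ hb => by rw [hoff b w hb.symm, mul_zero])
      (fun h => absurd (Finset.mem_univ w) h), hdiag w] at h0
    have hne : φ (g w) (x ι0) ≠ 0 := fun h =>
      (Finsupp.mem_support_iff.mp hι0) ((φ (g w)).injective (by rw [h, map_zero]))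
    rcases mul_eq_zero.mp h0 with h | h
    · exact h
    · exact absurd h hne
  -- confinement of the translates of x'
  set G : Finset Ψ := F ∪ Finset.image u Finset.univ with hG
  have hGcard : G.card ≤ c + t * m := by
    refine le_trans (Finset.card_union_le _ _) (add_le_add le_rfl ?_)
    refine le_trans Finset.card_image_le ?_
    simp [Fintype.card_prod]
  have hconf : ∀ (v : Fin t → Fin m) (ι : {y // y ∈ T'} ↪ Ψ),
      embAct φ (g v) x' ι ≠ 0 → ∀ s, ι s ∈ G := by
    intro v ι hne s
    rw [embAct_apply] at hne
    set κ : {y // y ∈ T'} ↪ Ψ := ι.trans ((g v)⁻¹ : Equiv.Perm Ψ).toEmbedding with hκdef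
    have hκ : κ ∈ x'.support := Finsupp.mem_support_iff.mpr
      (fun h => hne (by rw [h, map_zero]))
    have hι : ι s = g v (κ s) := by
      show ι s = g v (((g v)⁻¹ : Equiv.Perm Ψ) (ι s))
      exact (Equiv.apply_symm_apply _ _).symm
    have hκF : κ s ∈ F := hx'F κ hκ s
    by_cases hrange : ∃ i, κ s = p i
    · obtain ⟨i, hi⟩ := hrange
      rw [hι, hi, hgp]
      exact Finset.mem_union_right _
        (Finset.mem_image.mpr ⟨(i, v i), Finset.mem_univ _, rfl⟩)
    · rw [hι, hgfix v _ hκF (fun i hi => hrange ⟨i, hi⟩)]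
      exact Finset.mem_union_left _ hκF
  set J : Finset ({y // y ∈ T'} ↪ Ψ) :=
    Finset.image (fun ιG : ({y // y ∈ T'} ↪ {y // y ∈ G}) =>
      ιG.trans (Function.Embedding.subtype fun y => y ∈ G)) Finset.univ with hJ
  have hJmem : ∀ (v : Fin t → Fin m) (ι : {y // y ∈ T'} ↪ Ψ),
      embAct φ (g v) x' ι ≠ 0 → ι ∈ J := by
    intro v ι hne
    refine Finset.mem_image.mpr ⟨⟨fun s => ⟨ι s, hconf v ι hne s⟩,
      fun s1 s2 h => ι.injective (congrArg Subtype.val h)⟩, Finset.mem_univ _, ?_⟩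
    ext s
    rfl
  have hJcard : J.card ≤ (c + t * m) ^ t' := by
    calc J.card ≤ Fintype.card ({y // y ∈ T'} ↪ {y // y ∈ G}) :=
          le_trans Finset.card_image_le (le_of_eq Finset.card_univ)
      _ = (Fintype.card {y // y ∈ G}).descFactorial (Fintype.card {y // y ∈ T'}) :=
          Fintype.card_embedding_eq
      _ ≤ (Fintype.card {y // y ∈ G}) ^ t' := by
          simp only [Fintype.card_coe]
          exact Nat.descFactorial_le_pow _ _
      _ ≤ (c + t * m) ^ t' := Nat.pow_le_pow_left (by rw [Fintype.card_coe]; exact hGcard) _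
  -- the counting inequality
  have hcount : (c + t * m) ^ t' < m ^ t := by
    have h1 : c + t * m ≤ (c + t) * m := by
      have : c ≤ c * m := Nat.le_mul_of_pos_right c hm1
      nlinarith
    calc (c + t * m) ^ t' ≤ ((c + t) * m) ^ t' := Nat.pow_le_pow_left h1 _
      _ = (c + t) ^ t' * m ^ t' := mul_pow _ _ _
      _ < m * m ^ t' := by
          have hlt : (c + t) ^ t' < m := Nat.lt_succ_self _
          exact Nat.mul_lt_mul_of_lt_of_le hlt le_rfl (Nat.pow_pos hm1)
      _ = m ^ (t' + 1) := by rw [pow_succ']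
      _ ≤ m ^ t := Nat.pow_le_pow_right hm1 (Nat.succ_le_of_lt htt')
  -- a nontrivial dependency among the translates of x'
  have hnotli : ¬ LinearIndependent A
      (fun v : Fin t → Fin m => (fun j : {ι // ι ∈ J} => embAct φ (g v) x' j.1)) := by
    intro hli
    have hle := hli.fintype_card_le_finrank
    rw [Module.finrank_fintype_fun_eq_card] at hle
    have hcardfun : Fintype.card (Fin t → Fin m) = m ^ t := by
      simp [Fintype.card_fun]
    rw [hcardfun, Fintype.card_coe] at hle
    exact absurd hle (not_le.mpr (lt_of_le_of_lt hJcard hcount))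
  obtain ⟨cc, hccsum, w0, hw0⟩ := Fintype.not_linearIndependent_iff.mp hnotli
  have hsum' : ∑ v, cc v • embAct φ (g v) x' = 0 := by
    ext ι
    rw [Finset.sum_apply']
    simp only [Finsupp.smul_apply, smul_eq_mul, Finsupp.coe_zero, Pi.zero_apply]
    by_cases hι : ι ∈ J
    · have h2 := congrFun hccsum ⟨ι, hι⟩
      simpa using h2
    · apply Finset.sum_eq_zero
      intro v _
      have : embAct φ (g v) x' ι = 0 := by
        by_contra hcon
        exact hι (hJmem v ι hcon)
      rw [this, mul_zero]
  -- transfer the dependency back through e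
  set X : (Fin t → Fin m) → M := fun v => ⟨embAct φ (g v) x, hMst (g v) x hxM⟩ with hX
  have heX : ∀ v, (e (X v) : ({y // y ∈ T'} ↪ Ψ) →₀ A) = embAct φ (g v) x' :=
    fun v => heqv (g v) ⟨x, hxM⟩ (X v) rfl
  have h1 : M'.subtype (e (∑ v, cc v • X v)) = 0 := by
    rw [map_sum, map_sum]
    simp only [map_smul]
    calc ∑ v, cc v • M'.subtype (e (X v))
        = ∑ v, cc v • embAct φ (g v) x' := by
          apply Finset.sum_congr rfl
          intro v _
          rw [show M'.subtype (e (X v)) = (e (X v) : ({y // y ∈ T'} ↪ Ψ) →₀ A) from rfl,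
            heX v]
      _ = 0 := hsum'
  have h1' : e (∑ v, cc v • X v) = 0 := by
    apply Submodule.injective_subtype M'
    rw [h1, map_zero]
  have h2 : (∑ v, cc v • X v) = 0 := by
    apply einj
    rw [h1', map_zero]
  have h3 : ∑ v, cc v • embAct φ (g v) x = 0 := by
    have h4 := congrArg (M.subtype) h2
    rw [map_sum, map_zero] at h4
    simp only [map_smul] at h4
    exact h4
  exact hw0 (hind cc h3 w0)
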